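/- Let α > 1, let P, Q be probability measures on a measurable space X, and let κ, η be Markov kernels from X to a measurable space Y. If D_α(P ‖ Q) ≤ ε₁ and D_α(κ(x) ‖ η(x)) ≤ ε₂ for every x ∈ X, then the composed joint measures satisfy D_α(P ⊗ₘ κ ‖ Q ⊗ₘ η) ≤ ε₁ + ε₂, where P ⊗ₘ κ denotes the measure on X×Y defined by (P ⊗ₘ κ)(A×B) = ∫_A κ(x)(B) dP(x). -/

import Mathlib

open MeasureTheory ProbabilityTheory ENNReal

open Classical in
/-- The Rényi divergence of order `α` between two measures: `(α-1)⁻¹ log ∫ (dP/dQ)^α dQ`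
when `P ≪ Q`, and `⊤` otherwise. -/
noncomputable def renyiDiv {X : Type*} [MeasurableSpace X] (α : ℝ) (P Q : Measure X) : EReal :=
  if P ≪ Q then ((α - 1)⁻¹ : ℝ) * ENNReal.log (∫⁻ x, (P.rnDeriv Q x) ^ α ∂Q) else ⊤

private lemma renyi_boot {J K : ℝ≥0∞} {a : ℝ} (ha : 0 < a) (hJ : J ≠ ⊤)
    (h : J ≤ K ^ a * J ^ (1 - a)) : J ≤ K := by
  rcases eq_or_ne J 0 with rfl | hJ0
  · exact zero_le'
  have hJ1 : J ^ a * J ^ (1 - a) = J := by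
    rw [← ENNReal.rpow_add _ _ hJ0 hJ, add_sub_cancel, ENNReal.rpow_one]
  have hne0 : J ^ (1 - a) ≠ 0 := by
    simp [ENNReal.rpow_eq_zero_iff, hJ0, hJ]
  have hnetop : J ^ (1 - a) ≠ ⊤ := by
    simp [ENNReal.rpow_eq_top_iff, hJ0, hJ]
  have h2 : J ^ a ≤ K ^ a := by
    rw [← ENNReal.mul_le_mul_iff_left hne0 hnetop, hJ1]
    exact h
  calc J = (J ^ a) ^ a⁻¹ := by
        rw [← ENNReal.rpow_mul, mul_inv_cancel₀ ha.ne', ENNReal.rpow_one]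
    _ ≤ (K ^ a) ^ a⁻¹ := ENNReal.rpow_le_rpow h2 (inv_nonneg.2 ha.le)
    _ = K := by rw [← ENNReal.rpow_mul, mul_inv_cancel₀ ha.ne', ENNReal.rpow_one]

private lemma renyi_iSup_min_rpow (x : ℝ≥0∞) {a : ℝ} (ha : 1 ≤ a) :
    ⨆ n : ℕ, (min x n) ^ a = x ^ a := by
  refine le_antisymm
    (iSup_le fun n => ENNReal.rpow_le_rpow (min_le_left _ _) (zero_le_one.trans ha)) ?_
  rcases eq_or_ne x ⊤ with rfl | hx
  · calc (⊤ : ℝ≥0∞) ^ a ≤ ⊤ := le_top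
      _ = ⨆ n : ℕ, (n : ℝ≥0∞) := ENNReal.iSup_natCast.symm
      _ ≤ ⨆ n : ℕ, (min ⊤ (n : ℝ≥0∞)) ^ a := by
          refine iSup_mono fun n => ?_
          rw [min_eq_right (le_top : (n : ℝ≥0∞) ≤ ⊤)]
          rcases Nat.eq_zero_or_pos n with rfl | hn
          · simp
          · calc (n : ℝ≥0∞) = (n : ℝ≥0∞) ^ (1 : ℝ) := (ENNReal.rpow_one _).symm
              _ ≤ (n : ℝ≥0∞) ^ a := ENNReal.rpow_le_rpow_of_exponent_le
                  (by exact_mod_cast hn) ha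
  · obtain ⟨n, hn⟩ := ENNReal.exists_nat_gt hx
    refine le_trans ?_ (le_iSup (fun n : ℕ => (min x n) ^ a) n)
    rw [min_eq_left hn.le]

private lemma renyi_key {X Y : Type*} [MeasurableSpace X] [MeasurableSpace Y]
    {α : ℝ} (hα : 1 < α)
    (P Q : Measure X) [IsProbabilityMeasure P] [IsProbabilityMeasure Q]
    (κ η : Kernel X Y) [IsMarkovKernel κ] [IsMarkovKernel η]
    (hPQ : P ≪ Q) (hκη : ∀ x, κ x ≪ η x)
    {C₂ : ℝ≥0∞}
    (h2 : ∀ x, ∫⁻ y, ((κ x).rnDeriv (η x) y) ^ α ∂(η x) ≤ C₂)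
    (hC₁ : ∫⁻ x, (P.rnDeriv Q x) ^ α ∂Q ≠ ⊤) :
    ∫⁻ p, ((P ⊗ₘ κ).rnDeriv (Q ⊗ₘ η) p) ^ α ∂(Q ⊗ₘ η)
      ≤ (∫⁻ x, (P.rnDeriv Q x) ^ α ∂Q) * C₂ := by
  have hαpos : (0:ℝ) < α := zero_lt_one.trans hα
  have hα1 : (0:ℝ) < α - 1 := sub_pos.2 hα
  have hainv : (0:ℝ) < α⁻¹ := inv_pos.2 hαpos
  have hg : Measurable ((P ⊗ₘ κ).rnDeriv (Q ⊗ₘ η)) := Measure.measurable_rnDeriv _ _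
  have hf : Measurable (P.rnDeriv Q) := Measure.measurable_rnDeriv _ _
  have hμν : (P ⊗ₘ κ) ≪ (Q ⊗ₘ η) :=
    Measure.AbsolutelyContinuous.compProd hPQ (Filter.Eventually.of_forall hκη)
  set g := (P ⊗ₘ κ).rnDeriv (Q ⊗ₘ η) with hg_def
  set f := P.rnDeriv Q with hf_def
  set C₁ := ∫⁻ x, f x ^ α ∂Q with hC₁_def
  -- conjugate exponent facts
  have hconj : Real.HolderConjugate α (α / (α - 1)) := by
    have := Real.HolderConjugate.conjExponent hα
    rwa [Real.conjExponent] at this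
  have hexp1 : (α - 1) * (α / (α - 1)) = α := by field_simp
  have hexp2 : (1 / (α / (α - 1))) = 1 - α⁻¹ := by field_simp
  have hexp3 : (1 - α⁻¹) * (α / (α - 1)) = 1 := by field_simp
  have hJn : ∀ n : ℕ, ∫⁻ p, (min (g p) n) ^ α ∂(Q ⊗ₘ η) ≤ C₁ * C₂ := by
    intro n
    set Gn : X × Y → ℝ≥0∞ := fun p => min (g p) n with hGn_def
    have hGn : Measurable Gn := hg.min measurable_const
    have hGn1 : Measurable fun p => Gn p ^ (α - 1) :=
      ENNReal.continuous_rpow_const.measurable.comp hGn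
    have hGnα : Measurable fun p => Gn p ^ α :=
      ENNReal.continuous_rpow_const.measurable.comp hGn
    have hJx : Measurable fun x => ∫⁻ y, Gn (x, y) ^ α ∂(η x) :=
      Measurable.lintegral_kernel_prod_right (f := fun x y => Gn (x, y) ^ α) hGnα
    have hInner : Measurable fun x => ∫⁻ y, Gn (x, y) ^ (α - 1) ∂(κ x) :=
      Measurable.lintegral_kernel_prod_right (f := fun x y => Gn (x, y) ^ (α - 1)) hGn1
    have hJfin : ∫⁻ p, Gn p ^ α ∂(Q ⊗ₘ η) ≠ ⊤ := by
      refine ne_top_of_le_ne_top ?_ (lintegral_mono fun p =>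
        ENNReal.rpow_le_rpow (min_le_right _ _) hαpos.le)
      rw [lintegral_const]
      exact ENNReal.mul_ne_top (ENNReal.rpow_ne_top_of_nonneg hαpos.le (ENNReal.natCast_ne_top n))
        (measure_ne_top _ _)
    have step1 : ∫⁻ p, Gn p ^ α ∂(Q ⊗ₘ η) ≤ ∫⁻ p, g p * Gn p ^ (α - 1) ∂(Q ⊗ₘ η) := by
      refine lintegral_mono fun p => ?_
      rcases eq_or_ne (Gn p) 0 with h0 | h0
      · simp [h0, ENNReal.zero_rpow_of_pos hαpos]
      · have hne : Gn p ≠ ⊤ := (min_le_right _ _).trans_lt (ENNReal.natCast_lt_top n) |>.ne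
        have : Gn p ^ α = Gn p * Gn p ^ (α - 1) := by
          conv_lhs => rw [show α = 1 + (α - 1) by ring]
          rw [ENNReal.rpow_add _ _ h0 hne, ENNReal.rpow_one]
        rw [this]
        exact mul_le_mul_left (min_le_left _ _) _
    have step2 : ∫⁻ p, g p * Gn p ^ (α - 1) ∂(Q ⊗ₘ η) = ∫⁻ p, Gn p ^ (α - 1) ∂(P ⊗ₘ κ) := by
      conv_rhs => rw [← Measure.withDensity_rnDeriv_eq _ _ hμν]
      rw [lintegral_withDensity_eq_lintegral_mul _ hg hGn1]
      rfl
    have step3 : ∫⁻ p, Gn p ^ (α - 1) ∂(P ⊗ₘ κ)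
        = ∫⁻ x, f x * ∫⁻ y, Gn (x, y) ^ (α - 1) ∂(κ x) ∂Q := by
      rw [Measure.lintegral_compProd hGn1]
      conv_lhs => rw [← Measure.withDensity_rnDeriv_eq P Q hPQ]
      rw [lintegral_withDensity_eq_lintegral_mul _ hf hInner]
      rfl
    have step4 : ∀ x, ∫⁻ y, Gn (x, y) ^ (α - 1) ∂(κ x)
        ≤ C₂ ^ α⁻¹ * (∫⁻ y, Gn (x, y) ^ α ∂(η x)) ^ (1 - α⁻¹) := by
      intro x
      have hr : Measurable ((κ x).rnDeriv (η x)) := Measure.measurable_rnDeriv _ _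
      have hGx1 : Measurable fun y => Gn (x, y) ^ (α - 1) :=
        hGn1.comp measurable_prodMk_left
      calc ∫⁻ y, Gn (x, y) ^ (α - 1) ∂(κ x)
          = ∫⁻ y, (κ x).rnDeriv (η x) y * Gn (x, y) ^ (α - 1) ∂(η x) := by
            conv_lhs => rw [← Measure.withDensity_rnDeriv_eq (κ x) (η x) (hκη x)]
            rw [lintegral_withDensity_eq_lintegral_mul _ hr hGx1]
            rfl
        _ ≤ (∫⁻ y, (κ x).rnDeriv (η x) y ^ α ∂(η x)) ^ (1 / α)
            * (∫⁻ y, (Gn (x, y) ^ (α - 1)) ^ (α / (α - 1)) ∂(η x)) ^ (1 / (α / (α - 1))) :=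
            ENNReal.lintegral_mul_le_Lp_mul_Lq _ hconj hr.aemeasurable hGx1.aemeasurable
        _ ≤ C₂ ^ α⁻¹ * (∫⁻ y, Gn (x, y) ^ α ∂(η x)) ^ (1 - α⁻¹) := by
            rw [one_div, hexp2]
            refine mul_le_mul' (ENNReal.rpow_le_rpow (h2 x) hainv.le) (le_of_eq ?_)
            congr 1
            refine lintegral_congr fun y => ?_
            rw [← ENNReal.rpow_mul, hexp1]
    have step5 : ∫⁻ x, f x * ∫⁻ y, Gn (x, y) ^ (α - 1) ∂(κ x) ∂Q
        ≤ C₂ ^ α⁻¹ * (C₁ ^ α⁻¹ * (∫⁻ p, Gn p ^ α ∂(Q ⊗ₘ η)) ^ (1 - α⁻¹)) := by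
      have hJxm : Measurable fun x => (∫⁻ y, Gn (x, y) ^ α ∂(η x)) ^ (1 - α⁻¹) :=
        ENNReal.continuous_rpow_const.measurable.comp hJx
      calc ∫⁻ x, f x * ∫⁻ y, Gn (x, y) ^ (α - 1) ∂(κ x) ∂Q
          ≤ ∫⁻ x, C₂ ^ α⁻¹ * (f x * (∫⁻ y, Gn (x, y) ^ α ∂(η x)) ^ (1 - α⁻¹)) ∂Q := by
            refine lintegral_mono fun x => ?_
            rw [mul_left_comm]
            exact mul_le_mul_right (step4 x) _
        _ = C₂ ^ α⁻¹ * ∫⁻ x, f x * (∫⁻ y, Gn (x, y) ^ α ∂(η x)) ^ (1 - α⁻¹) ∂Q := by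
            exact lintegral_const_mul _ (hf.mul hJxm)
        _ ≤ C₂ ^ α⁻¹ * ((∫⁻ x, f x ^ α ∂Q) ^ (1 / α)
            * (∫⁻ x, ((∫⁻ y, Gn (x, y) ^ α ∂(η x)) ^ (1 - α⁻¹)) ^ (α / (α - 1)) ∂Q)
              ^ (1 / (α / (α - 1)))) := by
            exact mul_le_mul_right
              (ENNReal.lintegral_mul_le_Lp_mul_Lq _ hconj hf.aemeasurable hJxm.aemeasurable) _
        _ = C₂ ^ α⁻¹ * (C₁ ^ α⁻¹ * (∫⁻ p, Gn p ^ α ∂(Q ⊗ₘ η)) ^ (1 - α⁻¹)) := by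
            have hEq : (∫⁻ x, ((∫⁻ y, Gn (x, y) ^ α ∂(η x)) ^ (1 - α⁻¹)) ^ (α / (α - 1)) ∂Q)
                = ∫⁻ x, ∫⁻ y, Gn (x, y) ^ α ∂(η x) ∂Q :=
              lintegral_congr fun x => by rw [← ENNReal.rpow_mul, hexp3, ENNReal.rpow_one]
            rw [hEq, Measure.lintegral_compProd hGnα, one_div, hexp2]
    have hfinal : ∫⁻ p, Gn p ^ α ∂(Q ⊗ₘ η)
        ≤ (C₁ * C₂) ^ α⁻¹ * (∫⁻ p, Gn p ^ α ∂(Q ⊗ₘ η)) ^ (1 - α⁻¹) := by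
      calc ∫⁻ p, Gn p ^ α ∂(Q ⊗ₘ η) ≤ ∫⁻ p, g p * Gn p ^ (α - 1) ∂(Q ⊗ₘ η) := step1
        _ = ∫⁻ x, f x * ∫⁻ y, Gn (x, y) ^ (α - 1) ∂(κ x) ∂Q := by rw [step2, step3]
        _ ≤ C₂ ^ α⁻¹ * (C₁ ^ α⁻¹ * (∫⁻ p, Gn p ^ α ∂(Q ⊗ₘ η)) ^ (1 - α⁻¹)) := step5
        _ = (C₁ * C₂) ^ α⁻¹ * (∫⁻ p, Gn p ^ α ∂(Q ⊗ₘ η)) ^ (1 - α⁻¹) := by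
            rw [ENNReal.mul_rpow_of_nonneg _ _ hainv.le]
            ring
    exact renyi_boot hainv hJfin hfinal
  -- monotone convergence
  have hmeas : ∀ n : ℕ, Measurable fun p => (min (g p) (n : ℝ≥0∞)) ^ α := fun n =>
    ENNReal.continuous_rpow_const.measurable.comp (hg.min measurable_const)
  have hmono : Monotone fun (n : ℕ) (p : X × Y) => (min (g p) (n : ℝ≥0∞)) ^ α := by
    intro i j hij p
    exact ENNReal.rpow_le_rpow (min_le_min le_rfl (by exact_mod_cast hij)) hαpos.le
  calc ∫⁻ p, g p ^ α ∂(Q ⊗ₘ η)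
      = ∫⁻ p, ⨆ n : ℕ, (min (g p) n) ^ α ∂(Q ⊗ₘ η) := by
        refine lintegral_congr fun p => ?_
        rw [renyi_iSup_min_rpow _ hα.le]
    _ = ⨆ n : ℕ, ∫⁻ p, (min (g p) n) ^ α ∂(Q ⊗ₘ η) := lintegral_iSup hmeas hmono
    _ ≤ C₁ * C₂ := iSup_le hJn

private lemma renyi_le_exp {X : Type*} [MeasurableSpace X] {α ε : ℝ} (hα : 1 < α)
    {μ ν : Measure X} (h : renyiDiv α μ ν ≤ (ε : EReal)) :
    μ ≪ ν ∧ ∫⁻ z, (μ.rnDeriv ν z) ^ α ∂ν ≤ ENNReal.ofReal (Real.exp ((α - 1) * ε)) := by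
  have hα1 : (0:ℝ) < α - 1 := sub_pos.2 hα
  have hac : μ ≪ ν := by
    by_contra hc
    rw [renyiDiv, if_neg hc] at h
    exact (EReal.coe_lt_top ε).not_ge h
  refine ⟨hac, ?_⟩
  rw [renyiDiv, if_pos hac] at h
  set I := ∫⁻ z, (μ.rnDeriv ν z) ^ α ∂ν with hI_def
  have hr : (((α - 1)⁻¹ : ℝ) : EReal) * ENNReal.log I
      = ENNReal.log I / ((α - 1 : ℝ) : EReal) := by
    rw [div_eq_mul_inv, ← EReal.coe_inv, mul_comm]
  rw [hr, EReal.div_le_iff_le_mul (by exact_mod_cast hα1) (EReal.coe_ne_top _)] at h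
  rw [← EReal.coe_mul] at h
  have hlog : ENNReal.log (ENNReal.ofReal (Real.exp ((α - 1) * ε))) = ((α - 1) * ε : ℝ) := by
    rw [ENNReal.log_ofReal_of_pos (Real.exp_pos _), Real.log_exp]
  exact ENNReal.log_le_log_iff.mp (hlog ▸ h)

private lemma renyi_of_le_exp {X : Type*} [MeasurableSpace X] {α ε : ℝ} (hα : 1 < α)
    {μ ν : Measure X} (hac : μ ≪ ν)
    (h : ∫⁻ z, (μ.rnDeriv ν z) ^ α ∂ν ≤ ENNReal.ofReal (Real.exp ((α - 1) * ε))) :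
    renyiDiv α μ ν ≤ (ε : EReal) := by
  have hα1 : (0:ℝ) < α - 1 := sub_pos.2 hα
  rw [renyiDiv, if_pos hac]
  set I := ∫⁻ z, (μ.rnDeriv ν z) ^ α ∂ν with hI_def
  have hr : (((α - 1)⁻¹ : ℝ) : EReal) * ENNReal.log I
      = ENNReal.log I / ((α - 1 : ℝ) : EReal) := by
    rw [div_eq_mul_inv, ← EReal.coe_inv, mul_comm]
  rw [hr, EReal.div_le_iff_le_mul (by exact_mod_cast hα1) (EReal.coe_ne_top _), ← EReal.coe_mul]
  have hlog : ENNReal.log (ENNReal.ofReal (Real.exp ((α - 1) * ε))) = ((α - 1) * ε : ℝ) := by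
    rw [ENNReal.log_ofReal_of_pos (Real.exp_pos _), Real.log_exp]
  rw [← hlog]
  exact ENNReal.log_le_log_iff.mpr h

/-- Composition upper bound for the Rényi divergence: if `D_α(P ‖ Q) ≤ ε₁` and
`D_α(κ x ‖ η x) ≤ ε₂` for every `x`, then `D_α(P ⊗ₘ κ ‖ Q ⊗ₘ η) ≤ ε₁ + ε₂`. -/
theorem renyiDiv_compProd_le {X Y : Type*} [MeasurableSpace X] [MeasurableSpace Y]
    (α : ℝ) (hα : 1 < α)
    (P Q : Measure X) [IsProbabilityMeasure P] [IsProbabilityMeasure Q]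
    (κ η : Kernel X Y) [IsMarkovKernel κ] [IsMarkovKernel η]
    (ε₁ ε₂ : ℝ)
    (h₁ : renyiDiv α P Q ≤ (ε₁ : EReal))
    (h₂ : ∀ x, renyiDiv α (κ x) (η x) ≤ (ε₂ : EReal)) :
    renyiDiv α (P ⊗ₘ κ) (Q ⊗ₘ η) ≤ ((ε₁ + ε₂ : ℝ) : EReal) := by
  obtain ⟨hPQ, hI1⟩ := renyi_le_exp hα h₁
  have hx := fun x => renyi_le_exp hα (h₂ x)
  have hκη : ∀ x, κ x ≪ η x := fun x => (hx x).1
  have h2 : ∀ x, ∫⁻ y, ((κ x).rnDeriv (η x) y) ^ α ∂(η x)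
      ≤ ENNReal.ofReal (Real.exp ((α - 1) * ε₂)) := fun x => (hx x).2
  have hμν : (P ⊗ₘ κ) ≪ (Q ⊗ₘ η) :=
    Measure.AbsolutelyContinuous.compProd hPQ (Filter.Eventually.of_forall hκη)
  have hC₁ : ∫⁻ x, (P.rnDeriv Q x) ^ α ∂Q ≠ ⊤ :=
    (hI1.trans_lt ENNReal.ofReal_lt_top).ne
  have hkey := renyi_key hα P Q κ η hPQ hκη h2 hC₁
  refine renyi_of_le_exp hα hμν ?_
  calc ∫⁻ p, ((P ⊗ₘ κ).rnDeriv (Q ⊗ₘ η) p) ^ α ∂(Q ⊗ₘ η)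
      ≤ (∫⁻ x, (P.rnDeriv Q x) ^ α ∂Q) * ENNReal.ofReal (Real.exp ((α - 1) * ε₂)) := hkey
    _ ≤ ENNReal.ofReal (Real.exp ((α - 1) * ε₁)) * ENNReal.ofReal (Real.exp ((α - 1) * ε₂)) :=
        mul_le_mul_left hI1 _
    _ = ENNReal.ofReal (Real.exp ((α - 1) * (ε₁ + ε₂))) := by
        rw [← ENNReal.ofReal_mul (Real.exp_pos _).le, ← Real.exp_add]
        ring_nf
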